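/- If X ⊆ ℝ^d is a finite set with |X| = d + 2 such that the squared distance between any two distinct points is an odd integer, then d + 2 ≡ 0 (mod 4). -/

import Mathlib

open Finset Matrix

theorem odd_integral_sq_dist_tight_dim (d : ℕ) (X : Finset (EuclideanSpace ℝ (Fin d)))
    (h : ∀ x ∈ X, ∀ y ∈ X, x ≠ y → ∃ m : ℤ, Odd m ∧ dist x y ^ 2 = (m : ℝ))
    (hcard : X.card = d + 2) :
    (d + 2) % 4 = 0 := by
  classical
  set n := d + 2 with hn
  -- the points as a function `Fin n → E`
  set p : Fin n → EuclideanSpace ℝ (Fin d) :=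
    fun i => (X.equivFin.symm (finCongr hcard.symm i) : EuclideanSpace ℝ (Fin d)) with hp
  have hpX : ∀ i, p i ∈ X := fun i => (X.equivFin.symm (finCongr hcard.symm i)).2
  have hp_inj : Function.Injective p := by
    intro a b hab
    have h1 : X.equivFin.symm (finCongr hcard.symm a) = X.equivFin.symm (finCongr hcard.symm b) :=
      Subtype.coe_injective hab
    simpa using (finCongr hcard.symm).injective (X.equivFin.symm.injective h1)
  -- the integer matrix of squared distances
  have hD : ∃ D : Fin n → Fin n → ℤ,
      (∀ i j, ((D i j : ℤ) : ℝ) = dist (p i) (p j) ^ 2) ∧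
      (∀ i j, i ≠ j → Odd (D i j)) := by
    refine ⟨fun i j => if hij : i = j then 0 else
      (h (p i) (hpX i) (p j) (hpX j) (fun hh => hij (hp_inj hh))).choose, ?_, ?_⟩
    · intro i j
      by_cases hij : i = j
      · subst hij; simp
      · have hs := (h (p i) (hpX i) (p j) (hpX j) fun hh => hij (hp_inj hh)).choose_spec.2
        simp only [dif_neg hij]
        exact hs.symm
    · intro i j hij
      have hs := (h (p i) (hpX i) (p j) (hpX j) fun hh => hij (hp_inj hh)).choose_spec.1
      simpa only [dif_neg hij] using hs
  obtain ⟨D, hDval, hDodd⟩ := hD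
  have hDdiag : ∀ i, D i i = 0 := by
    intro i
    have h1 : ((D i i : ℤ) : ℝ) = 0 := by rw [hDval]; simp
    exact_mod_cast h1
  have hDsymm : ∀ i j, D i j = D j i := by
    intro i j
    have h1 : ((D i j : ℤ) : ℝ) = ((D j i : ℤ) : ℝ) := by rw [hDval, hDval, dist_comm]
    exact_mod_cast h1
  -- affine dependence
  have hnAI : ¬ AffineIndependent ℝ p := by
    intro hAI
    have h1 := hAI.card_le_finrank_succ
    have h2 : Module.finrank ℝ (vectorSpan ℝ (Set.range p)) ≤ d :=
      le_trans (Submodule.finrank_le _) (le_of_eq finrank_euclideanSpace_fin)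
    rw [Fintype.card_fin] at h1
    omega
  rw [affineIndependent_iff_of_fintype] at hnAI
  push_neg at hnAI
  obtain ⟨w, hw0, hwv, i₀, hwi₀⟩ := hnAI
  rw [Finset.weightedVSub_eq_linear_combination _ hw0] at hwv
  have hip : ∀ j, ∑ i, w i * (inner ℝ (p i) (p j) : ℝ) = 0 := by
    intro j
    have h1 : (inner ℝ (∑ i, w i • p i) (p j) : ℝ) = 0 := by rw [hwv]; exact inner_zero_left _
    rw [sum_inner] at h1
    rw [← h1]
    exact Finset.sum_congr rfl fun i _ => (real_inner_smul_left _ _ _).symm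
  have hDdist : ∀ i j, ((D i j : ℤ) : ℝ)
      = ‖p i‖ ^ 2 - 2 * (inner ℝ (p i) (p j) : ℝ) + ‖p j‖ ^ 2 := by
    intro i j; rw [hDval, dist_eq_norm, norm_sub_sq_real]
  have hrowR : ∀ j, ∑ i, w i * ((D i j : ℤ) : ℝ) = ∑ i, w i * ‖p i‖ ^ 2 := by
    intro j
    have e : ∑ i, w i * ((D i j : ℤ) : ℝ)
        = ∑ i, (w i * ‖p i‖ ^ 2 - 2 * (w i * (inner ℝ (p i) (p j) : ℝ)) + w i * ‖p j‖ ^ 2) :=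
      Finset.sum_congr rfl fun i _ => by rw [hDdist]; ring
    rw [e, Finset.sum_add_distrib, Finset.sum_sub_distrib, ← Finset.mul_sum, hip j,
      ← Finset.sum_mul, hw0]
    ring
  -- the auxiliary integer matrix
  set z : Fin n := ⟨0, by omega⟩ with hz
  set N : Matrix (Fin n) (Fin n) ℤ :=
    Matrix.of (fun j i => if j = z then 1 else D j i - D z i) with hN
  have hNR : N.map (Int.cast : ℤ → ℝ) *ᵥ w = 0 := by
    funext j
    simp only [Matrix.mulVec, dotProduct, Matrix.map_apply, hN, Matrix.of_apply,
      Pi.zero_apply]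
    by_cases hj : j = z
    · simp only [if_pos hj, Int.cast_one, one_mul]
      exact hw0
    · simp only [if_neg hj]
      push_cast
      have e : ∑ i, (((D j i : ℤ) : ℝ) - ((D z i : ℤ) : ℝ)) * w i
          = (∑ i, w i * ((D i j : ℤ) : ℝ)) - ∑ i, w i * ((D i z : ℤ) : ℝ) := by
        rw [← Finset.sum_sub_distrib]
        refine Finset.sum_congr rfl fun i _ => ?_
        rw [hDsymm i j, hDsymm i z]; ring
      rw [e, hrowR j, hrowR z, sub_self]
  have hwne : w ≠ 0 := fun hh => hwi₀ (congrFun hh i₀)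
  have hdetR : (N.map (Int.cast : ℤ → ℝ)).det = 0 :=
    Matrix.exists_mulVec_eq_zero_iff.mp ⟨w, hwne, hNR⟩
  have hdet : N.det = 0 := by
    have h1 : ((N.det : ℤ) : ℝ) = (N.map (Int.cast : ℤ → ℝ)).det := (Int.castRingHom ℝ).map_det N
    rw [hdetR] at h1
    exact_mod_cast h1
  obtain ⟨v, hvne, hvker⟩ := Matrix.exists_mulVec_eq_zero_iff.mpr hdet
  obtain ⟨i₁, hi₁⟩ : ∃ i, v i ≠ 0 := by
    by_contra hh; push_neg at hh; exact hvne (funext hh)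
  set c : Fin n → ℤ := fun i => v i / Finset.univ.gcd v with hc
  have hc1 : Finset.univ.gcd c = 1 := Finset.gcd_div_eq_one (Finset.mem_univ i₁) hi₁
  have hgdvd : ∀ i, Finset.univ.gcd v ∣ v i := fun i => Finset.gcd_dvd (Finset.mem_univ i)
  have hvc : ∀ i, v i = Finset.univ.gcd v * c i := fun i => (Int.mul_ediv_cancel' (hgdvd i)).symm
  have hgne : Finset.univ.gcd v ≠ 0 := by
    intro hh
    exact hi₁ (Finset.gcd_eq_zero_iff.mp hh i₁ (Finset.mem_univ i₁))
  have hcker : N *ᵥ c = 0 := by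
    funext j
    have h1 : (N *ᵥ v) j = 0 := congrFun hvker j
    have h2 : (N *ᵥ v) j = Finset.univ.gcd v * (N *ᵥ c) j := by
      simp only [Matrix.mulVec, dotProduct]
      rw [Finset.mul_sum]
      exact Finset.sum_congr rfl fun i _ => by rw [hvc i]; ring
    rw [h2] at h1
    exact (mul_eq_zero.mp h1).resolve_left hgne
  have hcsum : ∑ i, c i = 0 := by
    have h1 := congrFun hcker z
    simpa [hN, Matrix.mulVec, dotProduct] using h1
  have hrow : ∀ j, ∑ i, D j i * c i = ∑ i, D z i * c i := by
    intro j
    by_cases hj : j = z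
    · rw [hj]
    · have h1 := congrFun hcker j
      simp only [hN, Matrix.mulVec, dotProduct, Matrix.of_apply, if_neg hj,
        Pi.zero_apply] at h1
      have h2 : ∑ i, (D j i * c i - D z i * c i) = 0 := by
        rw [← h1]; exact Finset.sum_congr rfl fun i _ => by ring
      rw [Finset.sum_sub_distrib] at h2
      omega
  set t : ℤ := ∑ i, D z i * c i with ht
  -- mod 2: all entries of c are odd
  have hcast2 : ∀ j, ((c j : ℤ) : ZMod 2) = ((t : ℤ) : ZMod 2) := by
    intro j
    have h1 := congrArg (fun x : ℤ => (x : ZMod 2)) (hrow j)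
    push_cast at h1
    have h2 : ∀ i : Fin n, ((D j i : ℤ) : ZMod 2) = if i = j then 0 else 1 := by
      intro i
      by_cases hij : i = j
      · simp [hij, hDdiag]
      · obtain ⟨k, hk⟩ := hDodd j i (fun hh => hij hh.symm)
        rw [if_neg hij, hk]
        push_cast
        rw [show ((2 : ZMod 2)) = 0 by decide, zero_mul, zero_add]
    have h3 : ∑ i, ((D j i : ℤ) : ZMod 2) * ((c i : ℤ) : ZMod 2)
        = (∑ i, ((c i : ℤ) : ZMod 2)) - ((c j : ℤ) : ZMod 2) := by
      have e : ∀ i : Fin n, ((D j i : ℤ) : ZMod 2) * ((c i : ℤ) : ZMod 2)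
          = ((c i : ℤ) : ZMod 2) - (if i = j then ((c i : ℤ) : ZMod 2) else 0) := by
        intro i
        rw [h2 i]
        by_cases hij : i = j <;> simp [hij]
      rw [Finset.sum_congr rfl fun i _ => e i, Finset.sum_sub_distrib,
        Finset.sum_ite_eq' Finset.univ j (fun i => ((c i : ℤ) : ZMod 2)), if_pos (Finset.mem_univ j)]
    have h4 : (∑ i, ((c i : ℤ) : ZMod 2)) = 0 := by
      have := congrArg (fun x : ℤ => (x : ZMod 2)) hcsum
      push_cast at this
      exact this
    rw [h3, h4, zero_sub] at h1
    have h5 : ∀ x : ZMod 2, -x = x := by decide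
    rw [h5] at h1
    exact h1
  have htodd : ((t : ℤ) : ZMod 2) = 1 := by
    have hcases : ∀ x : ZMod 2, x = 0 ∨ x = 1 := by decide
    rcases hcases ((t : ℤ) : ZMod 2) with h0 | h1
    · exfalso
      have hdvd : ∀ i : Fin n, (2 : ℤ) ∣ c i := by
        intro i
        have h6 := hcast2 i
        rw [h0] at h6
        exact_mod_cast (ZMod.intCast_zmod_eq_zero_iff_dvd (c i) 2).mp h6
      have h7 : (2 : ℤ) ∣ Finset.univ.gcd c := Finset.dvd_gcd fun i _ => hdvd i
      rw [hc1] at h7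
      norm_num at h7
    · exact h1
  have hcodd : ∀ j, Odd (c j) := by
    intro j
    rw [← Int.not_even_iff_odd]
    intro hev
    have hdvd : (2 : ℤ) ∣ c j := hev.two_dvd
    have h6 : ((c j : ℤ) : ZMod 2) = 0 := by
      rw [ZMod.intCast_zmod_eq_zero_iff_dvd]
      exact_mod_cast hdvd
    rw [hcast2 j, htodd] at h6
    exact one_ne_zero h6
  -- mod 4 computation
  set K : Fin n → Fin n → ℤ :=
    fun j i => if j = i then 0 else c j * c i * ((D j i - 1) / 2) with hK
  have hterm : ∀ j i, c j * c i * D j i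
      = c j * c i + 2 * K j i - (if j = i then c j ^ 2 else 0) := by
    intro j i
    by_cases hji : j = i
    · subst hji
      simp [hK, hDdiag, sq]
    · obtain ⟨k, hk⟩ := hDodd j i hji
      simp only [hK, if_neg hji]
      rw [hk]
      have h2 : (2 * k + 1 - 1) / 2 = k := by omega
      rw [h2]
      ring
  have hQ : ∑ j, ∑ i, c j * c i * D j i = 0 := by
    have e : ∀ j, ∑ i, c j * c i * D j i = c j * t := by
      intro j
      rw [← hrow j, Finset.mul_sum]
      exact Finset.sum_congr rfl fun i _ => by ring
    rw [Finset.sum_congr rfl fun j _ => e j, ← Finset.sum_mul, hcsum, zero_mul]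
  have hP : ∑ j, ∑ i, (c j * c i) = 0 := by
    have e : ∀ j : Fin n, ∑ i, (c j * c i) = c j * (0 : ℤ) := by
      intro j; rw [← hcsum, Finset.mul_sum]
    rw [Finset.sum_congr rfl fun j _ => e j]
    simp
  have hdiagsum : ∑ j : Fin n, (∑ i : Fin n, if j = i then c j ^ 2 else 0) = ∑ j, c j ^ 2 := by
    refine Finset.sum_congr rfl fun j _ => ?_
    simp
  have hsq : ∑ j, (c j) ^ 2 = 2 * ∑ j, ∑ i, K j i := by
    have e1 : ∀ j, ∑ i, c j * c i * D j i
        = ∑ i, (c j * c i) + 2 * (∑ i, K j i) - (∑ i : Fin n, if j = i then c j ^ 2 else 0) := by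
      intro j
      rw [Finset.mul_sum, ← Finset.sum_add_distrib, ← Finset.sum_sub_distrib]
      exact Finset.sum_congr rfl fun i _ => hterm j i
    have e2 : ∑ j, ∑ i, c j * c i * D j i
        = ∑ j, ∑ i, (c j * c i) + 2 * (∑ j, ∑ i, K j i)
          - ∑ j : Fin n, (∑ i : Fin n, if j = i then c j ^ 2 else 0) := by
      rw [Finset.mul_sum, ← Finset.sum_add_distrib, ← Finset.sum_sub_distrib]
      exact Finset.sum_congr rfl fun j _ => e1 j
    rw [hQ, hP, hdiagsum] at e2
    omega
  have hKsymm : ∀ j i, K j i = K i j := by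
    intro j i
    by_cases hji : j = i
    · rw [hji]
    · simp only [hK, if_neg hji, if_neg (fun hh => hji hh.symm : ¬ i = j)]
      rw [hDsymm j i]
      ring
  have hKdiag : ∀ j, K j j = 0 := by
    intro j; simp [hK]
  have heven : (2 : ℤ) ∣ ∑ j, ∑ i, K j i := by
    have h2 : ((∑ j, ∑ i, K j i : ℤ) : ZMod 2) = 0 := by
      push_cast
      rw [← Finset.sum_product']
      refine Finset.sum_involution (fun a _ => (a.2, a.1)) ?_ ?_ ?_ ?_
      · intro a _
        rw [show K a.2 a.1 = K a.1 a.2 from hKsymm a.2 a.1]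
        exact (by decide : ∀ x : ZMod 2, x + x = 0) _
      · intro a _ hf hh
        have ha : a.2 = a.1 := congrArg Prod.fst hh
        apply hf
        rw [show a.1 = a.2 from ha.symm, hKdiag]
        exact Int.cast_zero
      · intro a _
        exact Finset.mem_product.mpr ⟨Finset.mem_univ _, Finset.mem_univ _⟩
      · intro a _; rfl
    exact_mod_cast (ZMod.intCast_zmod_eq_zero_iff_dvd _ 2).mp h2
  obtain ⟨m, hm⟩ := heven
  have h4 : ∑ j, (c j) ^ 2 = 4 * m := by omega
  have hone : ∀ j : Fin n, (((c j) ^ 2 : ℤ) : ZMod 4) = 1 := by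
    intro j
    obtain ⟨k, hk⟩ := hcodd j
    rw [hk]
    push_cast
    exact (by decide : ∀ x : ZMod 4, (2 * x + 1) ^ 2 = 1) _
  have hn4 : ((n : ℕ) : ZMod 4) = 0 := by
    have e : ((∑ j, (c j) ^ 2 : ℤ) : ZMod 4) = ∑ j : Fin n, (1 : ZMod 4) := by
      push_cast
      refine Finset.sum_congr rfl fun j _ => ?_
      have := hone j
      push_cast at this
      exact this
    rw [h4] at e
    have e2 : ((4 * m : ℤ) : ZMod 4) = 0 := by
      push_cast
      rw [show ((4 : ZMod 4)) = 0 by decide, zero_mul]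
    rw [e2] at e
    have e3 : (∑ j : Fin n, (1 : ZMod 4)) = (n : ZMod 4) := by
      simp
    rw [e3] at e
    exact e.symm
  have hdvd : 4 ∣ n := (ZMod.natCast_eq_zero_iff n 4).mp hn4
  omega
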